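/- For x ≠ 0, the noncentral t density satisfies f_{t_{ν,δ}}(x) = (ν/x) · [ F_{t_{ν+2,δ}}( x·√(1 + 2/ν) ) − F_{t_{ν,δ}}(x) ], where F_{t_{ν,δ}} and F_{t_{ν+2,δ}} are the CDFs of noncentral t distributions with ν and ν+2 degrees of freedom respectively and common noncentrality δ. -/

import Mathlib

open MeasureTheory ProbabilityTheory Real Set

/-- Standard normal probability density function φ. -/
noncomputable def stdNormalPDF (z : ℝ) : ℝ :=
  (Real.sqrt (2 * Real.pi))⁻¹ * Real.exp (- z ^ 2 / 2)

/-- Standard normal cumulative distribution function Φ. -/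
noncomputable def stdNormalCDF (x : ℝ) : ℝ := ∫ z in Set.Iic x, stdNormalPDF z

/-- Density of the chi-square distribution with ν degrees of freedom. -/
noncomputable def chiSqPDF (ν q : ℝ) : ℝ :=
  if 0 < q then ((1 : ℝ) / 2) ^ (ν / 2) / Real.Gamma (ν / 2) * q ^ (ν / 2 - 1) * Real.exp (- q / 2)
  else 0

/-- CDF of the chi-square distribution with ν degrees of freedom. -/
noncomputable def chiSqCDF (ν q : ℝ) : ℝ := ∫ t in Set.Iic q, chiSqPDF ν t

/-- Upper regularized incomplete gamma function Γ_u(a, x). -/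
noncomputable def upperRegGamma (a x : ℝ) : ℝ :=
  (∫ t in Set.Ioi x, Real.exp (-t) * t ^ (a - 1)) / Real.Gamma a

/-- Lower regularized incomplete gamma function Γ_l(a, x). -/
noncomputable def lowerRegGamma (a x : ℝ) : ℝ := 1 - upperRegGamma a x

open scoped ENNReal NNReal
open Filter Topology

noncomputable def nPhi (c : ℝ) : ℝ := ((ProbabilityTheory.gaussianReal 0 1) (Set.Iic c)).toReal

lemma nPhi_eq_integral (c : ℝ) :
    nPhi c = ∫ z in Iic c, gaussianPDFReal 0 1 z := by
  rw [nPhi, gaussianReal_apply_eq_integral 0 one_ne_zero,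
    ENNReal.toReal_ofReal (integral_nonneg (gaussianPDFReal_nonneg 0 1))]

lemma nPhi_nonneg (c : ℝ) : 0 ≤ nPhi c := ENNReal.toReal_nonneg

lemma nPhi_le_one (c : ℝ) : nPhi c ≤ 1 := by
  rw [nPhi, show (1:ℝ) = (1:ℝ≥0∞).toReal by simp]
  exact ENNReal.toReal_mono ENNReal.one_ne_top prob_le_one

lemma continuous_gaussianPDFReal01 : Continuous (gaussianPDFReal 0 1) := by
  unfold gaussianPDFReal
  fun_prop

lemma hasDerivAt_nPhi (c : ℝ) : HasDerivAt nPhi (gaussianPDFReal 0 1 c) c := by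
  have hint : Integrable (gaussianPDFReal 0 1) := integrable_gaussianPDFReal 0 1
  have key : ∀ b : ℝ, nPhi b = nPhi 0 + ∫ t in (0:ℝ)..b, gaussianPDFReal 0 1 t := by
    intro b
    rw [← intervalIntegral.integral_Iic_sub_Iic hint.integrableOn hint.integrableOn,
      nPhi_eq_integral, nPhi_eq_integral]
    ring
  have : HasDerivAt (fun b => nPhi 0 + ∫ t in (0:ℝ)..b, gaussianPDFReal 0 1 t)
      (gaussianPDFReal 0 1 c) c := by
    refine HasDerivAt.const_add _ ?_
    exact intervalIntegral.integral_hasDerivAt_right hint.intervalIntegrable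
      hint.aestronglyMeasurable.stronglyMeasurableAtFilter
      continuous_gaussianPDFReal01.continuousAt
  exact this.congr_of_eventuallyEq (Filter.Eventually.of_forall fun b => (key b))

lemma continuous_nPhi : Continuous nPhi :=
  continuous_iff_continuousAt.2 fun c => (hasDerivAt_nPhi c).continuousAt

lemma gaussianPDFReal01_le (z : ℝ) : gaussianPDFReal 0 1 z ≤ (Real.sqrt (2 * π))⁻¹ := by
  rw [gaussianPDFReal]
  have h1 : Real.exp (-(z - 0) ^ 2 / (2 * (1:ℝ≥0))) ≤ 1 := by
    rw [Real.exp_le_one_iff]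
    have : (0:ℝ) ≤ (z - 0)^2 := sq_nonneg _
    push_cast
    nlinarith
  calc (Real.sqrt (2 * π * (1:ℝ≥0)))⁻¹ * Real.exp (-(z - 0) ^ 2 / (2 * (1:ℝ≥0)))
      ≤ (Real.sqrt (2 * π * (1:ℝ≥0)))⁻¹ * 1 := by
        refine mul_le_mul_of_nonneg_left h1 (by positivity)
    _ = (Real.sqrt (2 * π))⁻¹ := by push_cast; rw [mul_one, mul_one]

lemma cdf_formula {Ω : Type*} [MeasurableSpace Ω] (P : Measure Ω) [IsProbabilityMeasure P]
    (Z Q : Ω → ℝ) (hZ : Measurable Z) (hQ : Measurable Q) (θ δ : ℝ) (hθ : 0 < θ)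
    (hZlaw : Measure.map Z P = gaussianReal 0 1)
    (hQlaw : Measure.map Q P = gammaMeasure (θ/2) (1/2))
    (hindep : IndepFun Z Q P) (y : ℝ) :
    (P {ω | (Z ω + δ) / Real.sqrt (Q ω / θ) ≤ y}).toReal
      = ∫ q in Ioi 0, nPhi (y * Real.sqrt (q / θ) - δ) * gammaPDFReal (θ/2) (1/2) q := by
  have ha2 : 0 < θ/2 := by positivity
  have : IsProbabilityMeasure (gammaMeasure (θ/2) (1/2)) :=
    isProbabilityMeasure_gammaMeasure ha2 (by norm_num)
  set S : Set (ℝ × ℝ) := {p | (p.1 + δ) / Real.sqrt (p.2 / θ) ≤ y} with hS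
  have hSm : MeasurableSet S := by
    apply measurableSet_le _ measurable_const
    fun_prop
  have hmap : Measure.map (fun ω => (Z ω, Q ω)) P
      = (gaussianReal 0 1).prod (gammaMeasure (θ/2) (1/2)) := by
    rw [← hZlaw, ← hQlaw]
    exact (indepFun_iff_map_prod_eq_prod_map_map hZ.aemeasurable hQ.aemeasurable).mp hindep
  have hPeq : P {ω | (Z ω + δ) / Real.sqrt (Q ω / θ) ≤ y}
      = ∫⁻ q, gaussianReal 0 1 ((fun z => (z, q)) ⁻¹' S) ∂(gammaMeasure (θ/2) (1/2)) := by
    have hpre : {ω | (Z ω + δ) / Real.sqrt (Q ω / θ) ≤ y} = (fun ω => (Z ω, Q ω)) ⁻¹' S := rfl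
    rw [hpre, ← Measure.map_apply (hZ.prodMk hQ) hSm, hmap, Measure.prod_apply_symm hSm]
  have hmeasG : Measurable fun q => gaussianReal 0 1 ((fun z => (z, q)) ⁻¹' S) :=
    measurable_measure_prodMk_right hSm
  have hgm : Measurable (gammaPDF (θ/2) (1/2)) := (measurable_gammaPDFReal _ _).ennreal_ofReal
  rw [hPeq, gammaMeasure, lintegral_withDensity_eq_lintegral_mul _ hgm hmeasG]
  set f : ℝ → ℝ≥0∞ :=
    (gammaPDF (θ/2) (1/2) * fun q => gaussianReal 0 1 ((fun z => (z, q)) ⁻¹' S)) with hf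
  have hsplit : ∫⁻ q, f q
      = ∫⁻ q in Ioi 0, ENNReal.ofReal
          (nPhi (y * Real.sqrt (q/θ) - δ) * gammaPDFReal (θ/2) (1/2) q) := by
    rw [← lintegral_add_compl f measurableSet_Ioi (μ := volume)]
    have hcompl : ∫⁻ q in (Ioi (0:ℝ))ᶜ, f q = 0 := by
      rw [compl_Ioi, ← setLIntegral_congr (Iio_ae_eq_Iic (a := (0:ℝ)))]
      rw [setLIntegral_congr_fun_ae (g := fun _ => 0) measurableSet_Iio
        (ae_of_all _ (fun q (hq : q < 0) => by
          simp [hf, Pi.mul_apply, gammaPDF_of_neg hq])), lintegral_zero]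
    have hIoi : ∫⁻ q in Ioi 0, f q = ∫⁻ q in Ioi 0, ENNReal.ofReal
        (nPhi (y * Real.sqrt (q/θ) - δ) * gammaPDFReal (θ/2) (1/2) q) := by
      refine setLIntegral_congr_fun_ae measurableSet_Ioi (ae_of_all _ (fun q hq => ?_))
      have hq : (0:ℝ) < q := hq
      have hsq : 0 < Real.sqrt (q/θ) := Real.sqrt_pos.2 (div_pos hq hθ)
      have hpre : ((fun z => (z, q)) ⁻¹' S) = Iic (y * Real.sqrt (q/θ) - δ) := by
        ext z
        simp only [hS, mem_preimage, mem_setOf_eq, mem_Iic]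
        rw [div_le_iff₀ hsq]
        constructor <;> intro h <;> linarith
      have hofReal : gaussianReal 0 1 (Iic (y * Real.sqrt (q/θ) - δ))
          = ENNReal.ofReal (nPhi (y * Real.sqrt (q/θ) - δ)) := by
        rw [nPhi, ENNReal.ofReal_toReal (measure_ne_top _ _)]
      simp only [hf, Pi.mul_apply, hpre, hofReal, gammaPDF]
      rw [← ENNReal.ofReal_mul (gammaPDFReal_nonneg ha2 (by norm_num) q), mul_comm]
    rw [hcompl, hIoi, add_zero]
  rw [hsplit]
  refine (integral_eq_lintegral_of_nonneg_ae (ae_of_all _ (fun q => ?_)) ?_).symm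
  · exact mul_nonneg (nPhi_nonneg _) (gammaPDFReal_nonneg ha2 (by norm_num) q)
  · refine Measurable.aestronglyMeasurable ?_
    have h1 : Measurable fun q : ℝ => nPhi (y * Real.sqrt (q/θ) - δ) :=
      (continuous_nPhi.comp (by continuity)).measurable
    exact h1.mul (measurable_gammaPDFReal _ _)

lemma integrableOn_rpow_exp {s : ℝ} (hs : -1 < s) :
    IntegrableOn (fun q : ℝ => q ^ s * Real.exp (-(1/2 * q))) (Ioi 0) := by
  have h := integrableOn_rpow_mul_exp_neg_mul_rpow hs (by norm_num : (0:ℝ) < 1) (by norm_num : (0:ℝ) < 1/2)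
  simpa [Real.rpow_one, neg_mul] using h

lemma gammaPDFReal_eq_on_Ioi {a : ℝ} {q : ℝ} (hq : 0 < q) :
    gammaPDFReal a (1/2) q
      = (1/2:ℝ) ^ a / Real.Gamma a * (q ^ (a-1) * Real.exp (-(1/2 * q))) := by
  rw [gammaPDFReal, if_pos hq.le]; ring

lemma integrableOn_weight_gamma {a : ℝ} (ha : 0 < a) {w : ℝ} (hw : 0 ≤ w) :
    IntegrableOn (fun q : ℝ => q ^ w * gammaPDFReal a (1/2) q) (Ioi 0) := by
  have h : (-1:ℝ) < w + a - 1 := by linarith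
  have h2 := (integrableOn_rpow_exp h).const_mul ((1/2:ℝ) ^ a / Real.Gamma a)
  refine IntegrableOn.congr_fun h2 (fun q hq => ?_) measurableSet_Ioi
  have hq0 : (0:ℝ) < q := hq
  rw [gammaPDFReal_eq_on_Ioi hq0, show w + a - 1 = w + (a-1) by ring, Real.rpow_add hq0]
  ring

lemma integrableOn_gamma {a : ℝ} (ha : 0 < a) :
    IntegrableOn (gammaPDFReal a (1/2)) (Ioi 0) := by
  have := integrableOn_weight_gamma ha (le_refl (0:ℝ))
  simpa [Real.rpow_zero] using this

lemma hasDerivAt_integral_nPhi (θ δ x : ℝ) (hθ : 0 < θ) :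
    HasDerivAt
      (fun y => ∫ q in Ioi 0, nPhi (y * Real.sqrt (q/θ) - δ) * gammaPDFReal (θ/2) (1/2) q)
      (∫ q in Ioi 0, gaussianPDFReal 0 1 (x * Real.sqrt (q/θ) - δ) * Real.sqrt (q/θ)
         * gammaPDFReal (θ/2) (1/2) q) x := by
  have ha2 : 0 < θ/2 := by positivity
  set μ := volume.restrict (Ioi (0:ℝ)) with hμ
  set F : ℝ → ℝ → ℝ :=
    fun t q => nPhi (t * Real.sqrt (q/θ) - δ) * gammaPDFReal (θ/2) (1/2) q with hF
  set F' : ℝ → ℝ → ℝ := fun t q => gaussianPDFReal 0 1 (t * Real.sqrt (q/θ) - δ)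
    * Real.sqrt (q/θ) * gammaPDFReal (θ/2) (1/2) q with hF'
  set bound : ℝ → ℝ := fun q =>
    (Real.sqrt (2*π))⁻¹ * (Real.sqrt θ)⁻¹ * (q ^ (1/2:ℝ) * gammaPDFReal (θ/2) (1/2) q) with hbd
  have hmeasF : ∀ t : ℝ, AEStronglyMeasurable (F t) μ := fun t =>
    ((continuous_nPhi.comp (by continuity : Continuous fun q : ℝ =>
      t * Real.sqrt (q/θ) - δ)).measurable.mul
      (measurable_gammaPDFReal _ _)).aestronglyMeasurable
  have hmeasF' : AEStronglyMeasurable (F' x) μ := by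
    refine Measurable.aestronglyMeasurable ?_
    have h1 : Continuous fun q : ℝ => gaussianPDFReal 0 1 (x * Real.sqrt (q/θ) - δ)
        * Real.sqrt (q/θ) :=
      (continuous_gaussianPDFReal01.comp (by continuity)).mul (by continuity)
    exact h1.measurable.mul (measurable_gammaPDFReal _ _)
  have hFint : Integrable (F x) μ := by
    refine Integrable.mono' (integrableOn_gamma ha2) (hmeasF x)
      (Filter.Eventually.of_forall fun q => ?_)
    have hg := gammaPDFReal_nonneg ha2 (by norm_num : (0:ℝ) < 1/2) q
    simp only [hF, Real.norm_eq_abs]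
    rw [abs_of_nonneg (mul_nonneg (nPhi_nonneg _) hg)]
    calc nPhi (x * Real.sqrt (q/θ) - δ) * gammaPDFReal (θ/2) (1/2) q
        ≤ 1 * gammaPDFReal (θ/2) (1/2) q := mul_le_mul_of_nonneg_right (nPhi_le_one _) hg
      _ = gammaPDFReal (θ/2) (1/2) q := one_mul _
  have hbound_int : Integrable bound μ := by
    have := (integrableOn_weight_gamma ha2 (by norm_num : (0:ℝ) ≤ 1/2)).const_mul
      ((Real.sqrt (2*π))⁻¹ * (Real.sqrt θ)⁻¹)
    simpa [hbd, mul_assoc] using this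
  have h_bound : ∀ᵐ q ∂μ, ∀ t ∈ Metric.ball x 1, ‖F' t q‖ ≤ bound q := by
    rw [hμ, ae_restrict_iff' measurableSet_Ioi]
    refine Filter.Eventually.of_forall fun q hq t _ => ?_
    have hq0 : (0:ℝ) < q := hq
    have hg := gammaPDFReal_nonneg ha2 (by norm_num : (0:ℝ) < 1/2) q
    have hsqnn : 0 ≤ Real.sqrt (q/θ) := Real.sqrt_nonneg _
    have hpdfnn := gaussianPDFReal_nonneg 0 1 (t * Real.sqrt (q/θ) - δ)
    simp only [hF', Real.norm_eq_abs]
    rw [abs_of_nonneg (mul_nonneg (mul_nonneg hpdfnn hsqnn) hg)]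
    have hsq : Real.sqrt (q/θ) = (Real.sqrt θ)⁻¹ * q ^ (1/2:ℝ) := by
      rw [show q/θ = q * θ⁻¹ by ring, Real.sqrt_mul hq0.le, Real.sqrt_inv,
        Real.sqrt_eq_rpow]
      ring
    have h1 := gaussianPDFReal01_le (t * Real.sqrt (q/θ) - δ)
    calc gaussianPDFReal 0 1 (t * Real.sqrt (q/θ) - δ) * Real.sqrt (q/θ)
          * gammaPDFReal (θ/2) (1/2) q
        ≤ (Real.sqrt (2*π))⁻¹ * Real.sqrt (q/θ) * gammaPDFReal (θ/2) (1/2) q := by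
          refine mul_le_mul_of_nonneg_right (mul_le_mul_of_nonneg_right h1 hsqnn) hg
      _ = bound q := by rw [hbd, hsq]; ring
  have h_diff : ∀ᵐ q ∂μ, ∀ t ∈ Metric.ball x 1, HasDerivAt (F · q) (F' t q) t := by
    refine Filter.Eventually.of_forall fun q t _ => ?_
    have h1 : HasDerivAt (fun t : ℝ => t * Real.sqrt (q/θ) - δ) (Real.sqrt (q/θ)) t := by
      simpa using ((hasDerivAt_id t).mul_const (Real.sqrt (q/θ))).sub_const δ
    have h2 := (hasDerivAt_nPhi (t * Real.sqrt (q/θ) - δ)).comp t h1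
    have h3 := h2.mul_const (gammaPDFReal (θ/2) (1/2) q)
    exact h3
  exact (hasDerivAt_integral_of_dominated_loc_of_deriv_le (Metric.ball_mem_nhds x one_pos)
    (Filter.Eventually.of_forall hmeasF) hFint hmeasF' h_bound hbound_int h_diff).2

set_option maxHeartbeats 2000000 in
lemma key_identity (ν δ x : ℝ) (hν : 0 < ν) (hx : x ≠ 0) :
    ∫ q in Ioi 0, gaussianPDFReal 0 1 (x * Real.sqrt (q/ν) - δ) * Real.sqrt (q/ν)
        * gammaPDFReal (ν/2) (1/2) q
      = ν/x * ((∫ q in Ioi 0, nPhi ((x * Real.sqrt (1+2/ν)) * Real.sqrt (q/(ν+2)) - δ)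
            * gammaPDFReal ((ν+2)/2) (1/2) q)
          - ∫ q in Ioi 0, nPhi (x * Real.sqrt (q/ν) - δ) * gammaPDFReal (ν/2) (1/2) q) := by
  have ha : 0 < ν/2 := by positivity
  set a : ℝ := ν/2 with hadef
  set C : ℝ := (1/2:ℝ) ^ a / Real.Gamma a with hC
  have hC0 : 0 < C := by
    rw [hC]
    exact div_pos (Real.rpow_pos_of_pos (by norm_num) a) (Real.Gamma_pos_of_pos ha)
  set s : ℝ → ℝ := fun q => x * Real.sqrt (q/ν) - δ with hs
  set g : ℝ → ℝ := gammaPDFReal (ν/2) (1/2) with hg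
  have hgnn : ∀ q, 0 ≤ g q := gammaPDFReal_nonneg ha (by norm_num)
  -- (A) the first integral is ∫ nPhi (s q) * (q/ν * g q)
  have hA : (∫ q in Ioi 0, nPhi ((x * Real.sqrt (1+2/ν)) * Real.sqrt (q/(ν+2)) - δ)
        * gammaPDFReal ((ν+2)/2) (1/2) q)
      = ∫ q in Ioi 0, nPhi (s q) * (q/ν * g q) := by
    refine setIntegral_congr_fun measurableSet_Ioi (fun q hq => ?_)
    have hq0 : (0:ℝ) < q := hq
    have h1 : (x * Real.sqrt (1+2/ν)) * Real.sqrt (q/(ν+2)) = x * Real.sqrt (q/ν) := by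
      rw [mul_assoc, ← Real.sqrt_mul (by positivity : (0:ℝ) ≤ 1+2/ν)]
      congr 2
      field_simp
    have h2 : gammaPDFReal ((ν+2)/2) (1/2) q = q/ν * g q := by
      have hne : a ≠ 0 := ne_of_gt ha
      have hΓ : Real.Gamma a ≠ 0 := ne_of_gt (Real.Gamma_pos_of_pos ha)
      have e1 : (ν+2)/2 = a + 1 := by rw [hadef]; ring
      rw [hg, gammaPDFReal_eq_on_Ioi hq0, gammaPDFReal_eq_on_Ioi hq0, e1,
        Real.Gamma_add_one hne,
        show a + 1 - 1 = (a - 1) + 1 by ring,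
        Real.rpow_add_one (by norm_num : (1/2:ℝ) ≠ 0) a,
        Real.rpow_add_one (ne_of_gt hq0) (a-1)]
      field_simp
      rw [show (ν-2)/2 = ν/2 - 1 by ring, hadef]
      ring
    rw [h1, h2]
  rw [hA]
  -- integrabilities
  have hmeas_s : Continuous fun q : ℝ => nPhi (s q) := by
    refine continuous_nPhi.comp ?_
    rw [hs]; continuity
  have hInt1 : IntegrableOn (fun q => nPhi (s q) * g q) (Ioi 0) := by
    refine Integrable.mono' (integrableOn_gamma ha) ?_
      (Filter.Eventually.of_forall fun q => ?_)
    · exact (hmeas_s.measurable.mul (measurable_gammaPDFReal _ _)).aestronglyMeasurable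
    · rw [Real.norm_eq_abs, abs_of_nonneg (mul_nonneg (nPhi_nonneg _) (hgnn q))]
      calc nPhi (s q) * g q ≤ 1 * g q := mul_le_mul_of_nonneg_right (nPhi_le_one _) (hgnn q)
        _ = g q := one_mul _
  have hIntqg : IntegrableOn (fun q : ℝ => q ^ (1:ℝ) * g q) (Ioi 0) :=
    integrableOn_weight_gamma ha (by norm_num)
  have hInt2 : IntegrableOn (fun q => nPhi (s q) * (q/ν * g q)) (Ioi 0) := by
    refine Integrable.mono' (hIntqg.const_mul ν⁻¹) ?_ ?_
    · exact (hmeas_s.measurable.mul ((measurable_id.div_const ν).mul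
        (measurable_gammaPDFReal _ _))).aestronglyMeasurable
    · rw [ae_restrict_iff' measurableSet_Ioi]
      refine Filter.Eventually.of_forall fun q hq => ?_
      have hq0 : (0:ℝ) < q := hq
      have hqg : 0 ≤ q/ν * g q := mul_nonneg (by positivity) (hgnn q)
      rw [Real.norm_eq_abs, abs_of_nonneg (mul_nonneg (nPhi_nonneg _) hqg)]
      calc nPhi (s q) * (q/ν * g q) ≤ 1 * (q/ν * g q) :=
            mul_le_mul_of_nonneg_right (nPhi_le_one _) hqg
        _ = ν⁻¹ * (q ^ (1:ℝ) * g q) := by rw [Real.rpow_one]; ring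
  have hInt3 : IntegrableOn (fun q => nPhi (s q) * ((q/ν - 1) * g q)) (Ioi 0) := by
    have : (fun q => nPhi (s q) * ((q/ν - 1) * g q))
        = fun q => nPhi (s q) * (q/ν * g q) - nPhi (s q) * g q := by
      funext q; ring
    rw [this]
    exact hInt2.sub hInt1
  have hIntF' : IntegrableOn
      (fun q => gaussianPDFReal 0 1 (s q) * Real.sqrt (q/ν) * g q) (Ioi 0) := by
    refine Integrable.mono'
      ((integrableOn_weight_gamma ha (by norm_num : (0:ℝ) ≤ 1/2)).const_mul
        ((Real.sqrt (2*π))⁻¹ * (Real.sqrt ν)⁻¹)) ?_ ?_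
    · refine Measurable.aestronglyMeasurable ?_
      have h1 : Continuous fun q : ℝ => gaussianPDFReal 0 1 (s q) * Real.sqrt (q/ν) := by
        refine (continuous_gaussianPDFReal01.comp ?_).mul (by continuity)
        rw [hs]; continuity
      exact h1.measurable.mul (measurable_gammaPDFReal _ _)
    · rw [ae_restrict_iff' measurableSet_Ioi]
      refine Filter.Eventually.of_forall fun q hq => ?_
      have hq0 : (0:ℝ) < q := hq
      have hsqnn : 0 ≤ Real.sqrt (q/ν) := Real.sqrt_nonneg _
      have hpdfnn := gaussianPDFReal_nonneg 0 1 (s q)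
      rw [Real.norm_eq_abs,
        abs_of_nonneg (mul_nonneg (mul_nonneg hpdfnn hsqnn) (hgnn q))]
      have hsqeq : Real.sqrt (q/ν) = (Real.sqrt ν)⁻¹ * q ^ (1/2:ℝ) := by
        rw [show q/ν = q * ν⁻¹ by ring, Real.sqrt_mul hq0.le, Real.sqrt_inv,
          Real.sqrt_eq_rpow]
        ring
      calc gaussianPDFReal 0 1 (s q) * Real.sqrt (q/ν) * g q
          ≤ (Real.sqrt (2*π))⁻¹ * Real.sqrt (q/ν) * g q := by
            refine mul_le_mul_of_nonneg_right
              (mul_le_mul_of_nonneg_right (gaussianPDFReal01_le (s q)) hsqnn) (hgnn q)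
        _ = (Real.sqrt (2*π))⁻¹ * (Real.sqrt ν)⁻¹ * (q ^ (1/2:ℝ) * g q) := by
            rw [hsqeq]; ring
  -- FTC step
  have hFTC : ∫ q in Ioi 0,
      (gaussianPDFReal 0 1 (s q) * Real.sqrt (q/ν) * g q
        - ν/x * (nPhi (s q) * ((q/ν - 1) * g q))) = 0 := by
    set k : ℝ → ℝ := fun q => C * (q ^ a * Real.exp (-(1/2 * q))) with hk
    set W : ℝ → ℝ := fun q => (2/x) * (nPhi (s q) * k q) with hW
    have hWd : ∀ q ∈ Ioi (0:ℝ), HasDerivAt W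
        (gaussianPDFReal 0 1 (s q) * Real.sqrt (q/ν) * g q
          - ν/x * (nPhi (s q) * ((q/ν - 1) * g q))) q := by
      intro q hq
      have hq0 : (0:ℝ) < q := hq
      have hqν : 0 < q/ν := div_pos hq0 hν
      have hsqrt : 0 < Real.sqrt (q/ν) := Real.sqrt_pos.2 hqν
      have hdiv : HasDerivAt (fun q : ℝ => q/ν) (1/ν) q := by
        simpa using (hasDerivAt_id q).div_const ν
      have hsq : HasDerivAt (fun q : ℝ => Real.sqrt (q/ν))
          (1 / (2 * Real.sqrt (q/ν)) * (1/ν)) q :=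
        (Real.hasDerivAt_sqrt (ne_of_gt hqν)).comp q hdiv
      have hsd : HasDerivAt s (x * (1 / (2 * Real.sqrt (q/ν)) * (1/ν))) q := by
        rw [hs]
        simpa using (hsq.const_mul x).sub_const δ
      have hPhis : HasDerivAt (fun q => nPhi (s q))
          (gaussianPDFReal 0 1 (s q) * (x * (1 / (2 * Real.sqrt (q/ν)) * (1/ν)))) q :=
        (hasDerivAt_nPhi (s q)).comp q hsd
      have hrp : HasDerivAt (fun q : ℝ => q ^ a) (a * q ^ (a-1)) q :=
        Real.hasDerivAt_rpow_const (Or.inl (ne_of_gt hq0))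
      have hlin : HasDerivAt (fun q : ℝ => -(1/2 * q)) (-(1/2)) q := by
        simpa [neg_mul] using (hasDerivAt_id q).const_mul (-(1/2) : ℝ)
      have hexp : HasDerivAt (fun q : ℝ => Real.exp (-(1/2 * q)))
          (Real.exp (-(1/2 * q)) * -(1/2)) q := by
        simpa using hlin.exp
      have hkd : HasDerivAt k
          (C * ((a * q ^ (a-1)) * Real.exp (-(1/2 * q))
             + q ^ a * (Real.exp (-(1/2 * q)) * -(1/2)))) q := by
        rw [hk]
        exact ((hrp.mul hexp).const_mul C)
      have hWd0 := ((hPhis.mul hkd).const_mul (2/x))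
      refine hWd0.congr_deriv ?_
      symm
      simp only [hk]
      rw [hg, gammaPDFReal_eq_on_Ioi hq0, ← hadef, ← hC]
      have hqa : q ^ a = q ^ (a-1) * q := by
        nth_rewrite 1 [show a = (a-1)+1 by ring]
        exact Real.rpow_add_one (ne_of_gt hq0) (a-1)
      rw [hqa]
      set E := Real.exp (-(1/2 * q)) with hE
      set T := q ^ (a-1) with hT
      set u := Real.sqrt (q/ν) with hu
      have hu0 : u ≠ 0 := ne_of_gt hsqrt
      have hq_eq : q = ν * u^2 := by
        rw [hu, Real.sq_sqrt hqν.le]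
        field_simp
      rw [hq_eq, hadef]
      field_simp
      ring
    have hcont0 : ContinuousWithinAt W (Ici 0) 0 := by
      apply ContinuousAt.continuousWithinAt
      have h1 : ContinuousAt (fun q : ℝ => q ^ a) 0 :=
        Real.continuousAt_rpow_const 0 a (Or.inr ha.le)
      have h2 : ContinuousAt (fun q : ℝ => Real.exp (-(1/2 * q))) 0 := by fun_prop
      have h3 : ContinuousAt (fun q : ℝ => nPhi (s q)) 0 := hmeas_s.continuousAt
      rw [hW, hk]
      exact (h3.mul (((h1.mul h2)).const_mul C)).const_mul (2/x)
    have hW0 : W 0 = 0 := by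
      simp [hW, hk, Real.zero_rpow (ne_of_gt ha)]
    have htop : Tendsto W atTop (𝓝 0) := by
      have hb : Tendsto (fun q : ℝ => (|2/x| * C) * (q ^ a * Real.exp (-(1/2 * q))))
          atTop (𝓝 0) := by
        have h0 := (tendsto_rpow_mul_exp_neg_mul_atTop_nhds_zero a (1/2)
          (by norm_num)).const_mul (|2/x| * C)
        rw [mul_zero] at h0
        refine h0.congr fun q => ?_
        rw [neg_mul]
      refine squeeze_zero_norm' ?_ hb
      filter_upwards [eventually_ge_atTop (0:ℝ)] with q hq
      have hEnn : (0:ℝ) ≤ Real.exp (-(1/2 * q)) := (Real.exp_pos _).le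
      have hqann : 0 ≤ q ^ a := Real.rpow_nonneg hq a
      have hknn : 0 ≤ k q := by
        rw [hk]
        positivity
      rw [hW, Real.norm_eq_abs]
      calc |(2/x) * (nPhi (s q) * k q)|
          = |2/x| * (nPhi (s q) * k q) := by
            rw [abs_mul, abs_of_nonneg (mul_nonneg (nPhi_nonneg _) hknn)]
        _ ≤ |2/x| * (1 * k q) := by
            refine mul_le_mul_of_nonneg_left
              (mul_le_mul_of_nonneg_right (nPhi_le_one _) hknn) (abs_nonneg _)
        _ = (|2/x| * C) * (q ^ a * Real.exp (-(1/2 * q))) := by rw [hk]; ring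
    have hWint : IntegrableOn
        (fun q => gaussianPDFReal 0 1 (s q) * Real.sqrt (q/ν) * g q
          - ν/x * (nPhi (s q) * ((q/ν - 1) * g q))) (Ioi 0) :=
      hIntF'.sub (hInt3.const_mul (ν/x))
    have hval := integral_Ioi_of_hasDerivAt_of_tendsto hcont0 hWd hWint htop
    rw [hW0, sub_zero] at hval
    exact hval
  -- combine
  have hsub : ∫ q in Ioi 0,
      (gaussianPDFReal 0 1 (s q) * Real.sqrt (q/ν) * g q
        - ν/x * (nPhi (s q) * ((q/ν - 1) * g q)))
      = (∫ q in Ioi 0, gaussianPDFReal 0 1 (s q) * Real.sqrt (q/ν) * g q)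
        - ν/x * ∫ q in Ioi 0, nPhi (s q) * ((q/ν - 1) * g q) := by
    rw [integral_sub hIntF' (hInt3.const_mul (ν/x)), integral_const_mul]
  have hsplit : ∫ q in Ioi 0, nPhi (s q) * ((q/ν - 1) * g q)
      = (∫ q in Ioi 0, nPhi (s q) * (q/ν * g q)) - ∫ q in Ioi 0, nPhi (s q) * g q := by
    rw [← integral_sub hInt2 hInt1]
    refine setIntegral_congr_fun measurableSet_Ioi (fun q hq => ?_)
    ring
  rw [hsub, hsplit] at hFTC
  linarith [hFTC]

/-- for x ≠ 0,
f_{t_{ν,δ}}(x) = (ν/x)·[F_{t_{ν+2,δ}}(x√(1+2/ν)) − F_{t_{ν,δ}}(x)]. -/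
theorem noncentralT_pdf_recurrence
    {Ω : Type*} [MeasurableSpace Ω] (P : Measure Ω) [IsProbabilityMeasure P]
    (Z Q : Ω → ℝ) (hZ : Measurable Z) (hQ : Measurable Q)
    (ν δ : ℝ) (hν : 0 < ν)
    (hZlaw : Measure.map Z P = ProbabilityTheory.gaussianReal 0 1)
    (hQlaw : Measure.map Q P = ProbabilityTheory.gammaMeasure (ν / 2) (1 / 2))
    (hindep : ProbabilityTheory.IndepFun Z Q P)
    (Q2 : Ω → ℝ) (hQ2 : Measurable Q2)
    (hQ2law : Measure.map Q2 P = ProbabilityTheory.gammaMeasure ((ν + 2) / 2) (1 / 2))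
    (hindep2 : ProbabilityTheory.IndepFun Z Q2 P)
    (x : ℝ) (hx : x ≠ 0) :
    HasDerivAt (fun y : ℝ => (P {ω | (Z ω + δ) / Real.sqrt (Q ω / ν) ≤ y}).toReal)
      (ν / x *
        ((P {ω | (Z ω + δ) / Real.sqrt (Q2 ω / (ν + 2)) ≤ x * Real.sqrt (1 + 2 / ν)}).toReal
          - (P {ω | (Z ω + δ) / Real.sqrt (Q ω / ν) ≤ x}).toReal)) x := by
  have hν2 : (0:ℝ) < ν + 2 := by linarith
  have hF : ∀ y, (P {ω | (Z ω + δ) / Real.sqrt (Q ω / ν) ≤ y}).toReal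
      = ∫ q in Ioi 0, nPhi (y * Real.sqrt (q/ν) - δ) * gammaPDFReal (ν/2) (1/2) q :=
    fun y => cdf_formula P Z Q hZ hQ ν δ hν hZlaw hQlaw hindep y
  have hF2 := cdf_formula P Z Q2 hZ hQ2 (ν+2) δ hν2 hZlaw hQ2law hindep2
    (x * Real.sqrt (1 + 2/ν))
  have hd := hasDerivAt_integral_nPhi ν δ x hν
  rw [key_identity ν δ x hν hx] at hd
  have hfun : (fun y : ℝ => (P {ω | (Z ω + δ) / Real.sqrt (Q ω / ν) ≤ y}).toReal)
      = fun y => ∫ q in Ioi 0, nPhi (y * Real.sqrt (q/ν) - δ) * gammaPDFReal (ν/2) (1/2) q :=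
    funext hF
  rw [hfun, hF x, hF2]
  exact hd
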